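/- arXiv:2411.13505 — 2 statements merged into one kernel-verified Lean document; each statement's English description precedes it below -/
import Mathlib

section
/- Let d ≥ 3 and let A = {x_1, …, x_n} ⊂ Z^d be a finite set of n distinct points. Then Cap(A) = Σ_{k=1}^n P_{x_k}(W[1,∞) ∩ {x_1, …, x_k} = ∅) · P_{x_k}(W[1,∞) ∩ {x_1, …, x_{k−1}} = ∅), where W is a simple random walk on Z^d started at x_k. -/
open MeasureTheory ProbabilityTheory Filter Topology
open scoped ENNReal

set_option linter.unusedSectionVars false
set_option linter.unusedVariables false
set_option maxHeartbeats 1000000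

namespace LERWCap

/-- The lattice `ℤ^d`. -/
abbrev Zd (d : ℕ) := Fin d → ℤ

/-- Euclidean norm on `ℤ^d`. -/
noncomputable def zNorm {d : ℕ} (x : Zd d) : ℝ := Real.sqrt (∑ i, ((x i : ℝ)) ^ 2)

/-- The set of unit steps of the simple random walk on `ℤ^d`. -/
def unitSteps (d : ℕ) : Set (Zd d) := {x | (∑ i, |x i|) = 1}

/-- `S` is a simple random walk on `ℤ^d` started at `0` under the probability measure `μ`:
its increments are i.i.d., uniform on the `2d` unit steps, and `S 0 = 0`. -/
structure IsSRW {Ω : Type*} [MeasurableSpace Ω] (μ : Measure Ω) (d : ℕ)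
    (S : Ω → ℕ → Zd d) : Prop where
  meas : ∀ n, Measurable fun ω => S ω n
  start : ∀ᵐ ω ∂μ, S ω 0 = 0
  indep : iIndepFun (fun n ω => S ω (n + 1) - S ω n) μ
  step : ∀ n, μ.map (fun ω => S ω (n + 1) - S ω n) = uniformOn (unitSteps d)

/-- The loop-erasure times `ℓ_i`: `ℓ_0 = 0`, `ℓ_{i+1} = 1 + max {k : p k = p (ℓ_i)}`
(for a transient path the set is finite and `sSup` is its maximum). -/
noncomputable def leTime {d : ℕ} (p : ℕ → Zd d) : ℕ → ℕ
  | 0 => 0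
  | i + 1 => sSup {k | p k = p (leTime p i)} + 1

/-- The loop-erasure `LE(p)` of a (transient) path `p`. -/
noncomputable def loopErase {d : ℕ} (p : ℕ → Zd d) (i : ℕ) : Zd d := p (leTime p i)

/-- The set of points `p[0,n]` visited by a one-sided path up to time `n`. -/
noncomputable def pathRange {d : ℕ} (p : ℕ → Zd d) (n : ℕ) : Finset (Zd d) :=
  (Finset.range (n + 1)).image p

/-- The set of points `p[0,n]` visited by a two-sided path at times `0,...,n`. -/
noncomputable def pathRangeZ {d : ℕ} (p : ℤ → Zd d) (n : ℕ) : Finset (Zd d) :=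
  (Finset.range (n + 1)).image fun i : ℕ => p (i : ℤ)

/-- Escape probability: the probability that a simple random walk `W` (law `μW`, started at `0`)
translated to start at `x` never returns to `A` at positive times, i.e.
`P_x(W[1,∞) ∩ A = ∅)`. -/
noncomputable def escProb {ΩW : Type*} [MeasurableSpace ΩW] (μW : Measure ΩW) {d : ℕ}
    (W : ΩW → ℕ → Zd d) (x : Zd d) (A : Set (Zd d)) : ℝ :=
  (μW {w | ∀ k, 1 ≤ k → x + W w k ∉ A}).toReal

/-- Hitting probability `P_x(W[0,∞) ∩ A ≠ ∅)`. -/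
noncomputable def hitProb {ΩW : Type*} [MeasurableSpace ΩW] (μW : Measure ΩW) {d : ℕ}
    (W : ΩW → ℕ → Zd d) (x : Zd d) (A : Set (Zd d)) : ℝ :=
  (μW {w | ∃ k : ℕ, x + W w k ∈ A}).toReal

/-- Capacity of a finite set `A ⊆ ℤ^d`: `Cap(A) = ∑_{a ∈ A} P_a(W[1,∞) ∩ A = ∅)`,
where `W` is a simple random walk. -/
noncomputable def cap {ΩW : Type*} [MeasurableSpace ΩW] (μW : Measure ΩW) {d : ℕ}
    (W : ΩW → ℕ → Zd d) (A : Finset (Zd d)) : ℝ :=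
  ∑ a ∈ A, escProb μW W a ↑A

/-- The left shift (with recentering) on two-sided paths: `(Tω)(k) = ω(k+1) − ω(1)`. -/
def shiftZ {d : ℕ} (p : ℤ → Zd d) : ℤ → Zd d := fun k => p (k + 1) - p 1

/-- Restriction of a two-sided path to nonnegative times. -/
def toOneSided {d : ℕ} (p : ℤ → Zd d) : ℕ → Zd d := fun n => p (n : ℤ)

/-- Glue two one-sided paths into a two-sided path  (`p` forwards, `q` backwards). -/
def glue {d : ℕ} (p q : ℕ → Zd d) : ℤ → Zd d :=
  fun z => if 0 ≤ z then p z.toNat else q (-z).toNat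

/-- `P(W[1,n] ∩ p[0,∞) = ∅)` as a function of the path `p`. -/
noncomputable def avoidOneSided {ΩW : Type*} [MeasurableSpace ΩW] (μW : Measure ΩW) {d : ℕ}
    (W : ΩW → ℕ → Zd d) (n : ℕ) (p : ℕ → Zd d) : ℝ :=
  (μW {w | ∀ k, 1 ≤ k → k ≤ n → ∀ j : ℕ, W w k ≠ p j}).toReal

/-- `P(W[1,n] ∩ p[1,∞) = ∅)` as a function of the path `p`. -/
noncomputable def avoidOneSidedPlus {ΩW : Type*} [MeasurableSpace ΩW] (μW : Measure ΩW) {d : ℕ}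
    (W : ΩW → ℕ → Zd d) (n : ℕ) (p : ℕ → Zd d) : ℝ :=
  (μW {w | ∀ k, 1 ≤ k → k ≤ n → ∀ j : ℕ, 1 ≤ j → W w k ≠ p j}).toReal

/-- `P(W[1,∞) ∩ p[0,n] = ∅)` as a function of the one-sided path `p`. -/
noncomputable def avoidSeg {ΩW : Type*} [MeasurableSpace ΩW] (μW : Measure ΩW) {d : ℕ}
    (W : ΩW → ℕ → Zd d) (n : ℕ) (p : ℕ → Zd d) : ℝ :=
  (μW {w | ∀ k, 1 ≤ k → ∀ j : ℕ, j ≤ n → W w k ≠ p j}).toReal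

/-- `P(W[1,∞) ∩ p[1,n] = ∅)` as a function of the one-sided path `p`. -/
noncomputable def avoidSegPlus {ΩW : Type*} [MeasurableSpace ΩW] (μW : Measure ΩW) {d : ℕ}
    (W : ΩW → ℕ → Zd d) (n : ℕ) (p : ℕ → Zd d) : ℝ :=
  (μW {w | ∀ k, 1 ≤ k → ∀ j : ℕ, 1 ≤ j → j ≤ n → W w k ≠ p j}).toReal

/-- `P(W[1,∞) ∩ p[0,n] = ∅)` as a function of the two-sided path `p`. -/
noncomputable def avoidSegZ {ΩW : Type*} [MeasurableSpace ΩW] (μW : Measure ΩW) {d : ℕ}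
    (W : ΩW → ℕ → Zd d) (n : ℕ) (p : ℤ → Zd d) : ℝ :=
  (μW {w | ∀ k, 1 ≤ k → ∀ j : ℕ, j ≤ n → W w k ≠ p (j : ℤ)}).toReal

/-- `P(W[1,∞) ∩ p[1,n] = ∅)` as a function of the two-sided path `p`. -/
noncomputable def avoidSegZPlus {ΩW : Type*} [MeasurableSpace ΩW] (μW : Measure ΩW) {d : ℕ}
    (W : ΩW → ℕ → Zd d) (n : ℕ) (p : ℤ → Zd d) : ℝ :=
  (μW {w | ∀ k, 1 ≤ k → ∀ j : ℕ, 1 ≤ j → j ≤ n → W w k ≠ p (j : ℤ)}).toReal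

/-! ### Auxiliary development -/

section Dev

variable {Ω : Type*} [MeasurableSpace Ω] {d : ℕ}

/-- increments of the walk -/
noncomputable def inc (W : Ω → ℕ → Zd d) (n : ℕ) (ω : Ω) : Zd d := W ω (n + 1) - W ω n

/-- sum of the first `k` increments -/
noncomputable def psum (W : Ω → ℕ → Zd d) (k : ℕ) (ω : Ω) : Zd d :=
  ∑ i ∈ Finset.range k, inc W i ω

/-- single-step distribution -/
noncomputable def stepP (d : ℕ) (e : Zd d) : ℝ≥0∞ := uniformOn (unitSteps d) {e}

/-- extension of a finite vector by `0` -/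
def fext {m : ℕ} (f : Fin m → Zd d) (i : ℕ) : Zd d := if h : i < m then f ⟨i, h⟩ else 0

/-- partial sums of a finite vector -/
def pfsum {m : ℕ} (f : Fin m → Zd d) (k : ℕ) : Zd d := ∑ i ∈ Finset.range k, fext f i

/-- cylinder event -/
def cyl (W : Ω → ℕ → Zd d) {m : ℕ} (f : Fin m → Zd d) : Set Ω :=
  {ω | ∀ i : Fin m, inc W i ω = f i}

/-- event: walk started at `x` avoids `A` at all positive times -/
def avoidE (W : Ω → ℕ → Zd d) (x : Zd d) (A : Set (Zd d)) : Set Ω :=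
  {ω | ∀ k, 1 ≤ k → x + psum W k ω ∉ A}

/-- event: walk restarted at time `m` from `a` avoids `D` for `K` steps -/
def blockE (W : Ω → ℕ → Zd d) (m K : ℕ) (a : Zd d) (D : Set (Zd d)) : Set Ω :=
  {ω | ∀ k, 1 ≤ k → k ≤ K → a + (psum W (m + k) ω - psum W m ω) ∉ D}

/-- event: walk restarted at time `m` from `a` avoids `D` forever -/
def avoidFromE (W : Ω → ℕ → Zd d) (m : ℕ) (a : Zd d) (D : Set (Zd d)) : Set Ω :=
  {ω | ∀ k, 1 ≤ k → a + (psum W (m + k) ω - psum W m ω) ∉ D}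

/-- event: first visit of the walk from `x` to `C` happens at time `m` at the point `a` -/
def hitsAtE (W : Ω → ℕ → Zd d) (x : Zd d) (C : Set (Zd d)) (a : Zd d) (m : ℕ) : Set Ω :=
  {ω | x + psum W m ω = a ∧ ∀ j, 1 ≤ j → j < m → x + psum W j ω ∉ C}

/-- combinatorial condition on an increment vector corresponding to `hitsAtE` -/
def Phi (x : Zd d) (C : Set (Zd d)) (a : Zd d) (m : ℕ) (f : Fin m → Zd d) : Prop :=
  x + pfsum f m = a ∧ ∀ j, 1 ≤ j → j < m → x + pfsum f j ∉ C

/-- reversal of an increment vector -/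
def revF {m : ℕ} (f : Fin m → Zd d) : Fin m → Zd d := fun i => -f i.rev

variable (μ : Measure Ω) [IsProbabilityMeasure μ] (W : Ω → ℕ → Zd d)

section Basic

variable (hW : IsSRW μ d W)
include hW

lemma meas_inc (n : ℕ) : Measurable (inc W n) := ((hW.meas (n + 1)).sub (hW.meas n))

lemma meas_psum (k : ℕ) : Measurable (psum W k) := by
  apply Finset.measurable_sum
  exact fun i _ => meas_inc μ W hW i

lemma law_inc (n : ℕ) (s : Set (Zd d)) :
    μ (inc W n ⁻¹' s) = uniformOn (unitSteps d) s := by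
  rw [← hW.step n,
    Measure.map_apply (show Measurable (fun ω => W ω (n + 1) - W ω n) from (hW.meas (n + 1)).sub (hW.meas n)) .of_discrete]
  rfl

lemma stepP_eq (n : ℕ) (e : Zd d) : μ (inc W n ⁻¹' {e}) = stepP d e :=
  law_inc μ W hW n {e}

lemma stepP_le_one (e : Zd d) : stepP d e ≤ 1 := by
  rw [← stepP_eq μ W hW 0 e]
  exact prob_le_one

lemma stepP_ne_top (e : Zd d) : stepP d e ≠ ∞ :=
  fun h => by simpa [h] using stepP_le_one μ W hW e

end Basic

lemma stepP_symm (e : Zd d) : stepP d (-e) = stepP d e := by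
  have hmem : -e ∈ unitSteps d ↔ e ∈ unitSteps d := by
    simp only [unitSteps, Set.mem_setOf_eq, Pi.neg_apply, abs_neg]
  unfold stepP uniformOn
  rw [cond_apply .of_discrete, cond_apply .of_discrete]
  congr 1
  by_cases h : e ∈ unitSteps d
  · rw [Set.inter_eq_self_of_subset_right (by simpa [Set.singleton_subset_iff] using hmem.2 h),
      Set.inter_eq_self_of_subset_right (by simpa [Set.singleton_subset_iff] using h)]
    simp [Measure.count_singleton]
  · rw [Set.inter_singleton_eq_empty.2 (fun hc => h (hmem.1 hc)),
      Set.inter_singleton_eq_empty.2 h]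


section Cyl

lemma fext_coe {m : ℕ} (f : Fin m → Zd d) (i : Fin m) : fext f (i : ℕ) = f i := by
  simp [fext, i.isLt]

lemma cyl_measurableSet {m : ℕ} (hW : IsSRW μ d W) (f : Fin m → Zd d) :
    MeasurableSet (cyl W f) := by
  have : cyl W f = ⋂ i : Fin m, inc W i ⁻¹' {f i} := by
    ext ω; simp [cyl]
  rw [this]
  exact MeasurableSet.iInter fun i => meas_inc μ W hW i .of_discrete

lemma cyl_disjoint {m : ℕ} :
    Pairwise (Function.onFun Disjoint fun f : Fin m → Zd d => cyl (Ω := Ω) W f) := by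
  intro f g hfg
  rw [Function.onFun, Set.disjoint_left]
  intro ω hf hg
  exact hfg (funext fun i => (hf i).symm.trans (hg i))

lemma measure_cyl_inter_block (hW : IsSRW μ d W) (m K : ℕ) (f : Fin m → Zd d)
    (g : Fin K → Zd d) :
    μ (cyl W f ∩ {ω | ∀ j : Fin K, inc W (m + (j : ℕ)) ω = g j}) =
      (∏ i, stepP d (f i)) * ∏ j, stepP d (g j) := by
  classical
  set h : ℕ → Zd d := fun n =>
    if hn : n < m then f ⟨n, hn⟩ else if hn2 : n - m < K then g ⟨n - m, hn2⟩ else 0 with hh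
  have hfm : ∀ (n : ℕ) (hn : n < m), h n = f ⟨n, hn⟩ := by
    intro n hn; simp only [hh, dif_pos hn]
  have hgK : ∀ j : Fin K, h (m + (j : ℕ)) = g j := by
    intro j
    have h1 : ¬ (m + (j : ℕ) < m) := by omega
    have h2 : m + (j : ℕ) - m < K := by have := j.isLt; omega
    have h3 : (⟨m + (j : ℕ) - m, h2⟩ : Fin K) = j := Fin.ext (by simp)
    simp only [hh, dif_neg h1, dif_pos h2, h3]
  have key := hW.indep.measure_inter_preimage_eq_mul (S := Finset.range (m + K))
    (sets := fun n => ({h n} : Set (Zd d))) (fun i _ => .of_discrete)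
  have hset : (⋂ i ∈ Finset.range (m + K), (fun ω => W ω (i + 1) - W ω i) ⁻¹' {h i}) =
      cyl W f ∩ {ω | ∀ j : Fin K, inc W (m + (j : ℕ)) ω = g j} := by
    ext ω
    simp only [Set.mem_iInter, Finset.mem_range, Set.mem_preimage, Set.mem_singleton_iff,
      cyl, Set.mem_inter_iff, Set.mem_setOf_eq]
    constructor
    · intro H
      constructor
      · intro i
        have hi := H i (by omega)
        show W ω ((i : ℕ) + 1) - W ω (i : ℕ) = f i
        rw [hi, hfm (i : ℕ) i.isLt]
      · intro j
        have hj := H (m + (j : ℕ)) (by omega)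
        show W ω (m + (j : ℕ) + 1) - W ω (m + (j : ℕ)) = g j
        rw [hj, hgK j]
    · rintro ⟨H1, H2⟩ i hi
      show W ω (i + 1) - W ω i = h i
      by_cases hm : i < m
      · rw [hfm i hm]; exact H1 ⟨i, hm⟩
      · have h2 : i - m < K := by omega
        have h4 : m + ((⟨i - m, h2⟩ : Fin K) : ℕ) = i := by simp; omega
        have := H2 ⟨i - m, h2⟩
        rw [h4] at this
        rw [show (h i : Zd d) = g ⟨i - m, h2⟩ by simp only [hh, dif_neg hm, dif_pos h2]]
        exact this
  rw [hset] at key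
  rw [key]
  have hprod : ∀ n : ℕ, μ ((fun ω => W ω (n + 1) - W ω n) ⁻¹' {h n}) = stepP d (h n) :=
    fun n => stepP_eq μ W hW n (h n)
  calc ∏ i ∈ Finset.range (m + K), μ ((fun ω => W ω (i + 1) - W ω i) ⁻¹' {h i})
      = ∏ i ∈ Finset.range (m + K), stepP d (h i) := Finset.prod_congr rfl fun i _ => hprod i
    _ = (∏ i ∈ Finset.range m, stepP d (h i)) * ∏ j ∈ Finset.range K, stepP d (h (m + j)) :=
        Finset.prod_range_add _ m K
    _ = (∏ i, stepP d (f i)) * ∏ j, stepP d (g j) := by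
        congr 1
        · rw [← Fin.prod_univ_eq_prod_range (fun i => stepP d (h i)) m]
          exact Finset.prod_congr rfl fun i _ => by rw [hfm (i : ℕ) i.isLt]
        · rw [← Fin.prod_univ_eq_prod_range (fun j => stepP d (h (m + j))) K]
          exact Finset.prod_congr rfl fun j _ => by rw [hgK j]

lemma measure_cyl (hW : IsSRW μ d W) {m : ℕ} (f : Fin m → Zd d) :
    μ (cyl W f) = ∏ i, stepP d (f i) := by
  have := measure_cyl_inter_block μ W hW m 0 f Fin.elim0
  simpa using this

lemma psum_eq_pfsum {m : ℕ} {f : Fin m → Zd d} {ω : Ω} (hω : ω ∈ cyl W f)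
    {k : ℕ} (hk : k ≤ m) : psum W k ω = pfsum f k := by
  unfold psum pfsum
  refine Finset.sum_congr rfl fun i hi => ?_
  rw [Finset.mem_range] at hi
  have him : i < m := lt_of_lt_of_le hi hk
  rw [hω ⟨i, him⟩]
  simp [fext, him]

lemma hitsAtE_eq_iUnion (x : Zd d) (C : Set (Zd d)) (a : Zd d) (m : ℕ) :
    hitsAtE W x C a m = ⋃ f : {f : Fin m → Zd d // Phi x C a m f}, cyl W f.1 := by
  ext ω
  simp only [Set.mem_iUnion]
  constructor
  · rintro ⟨h1, h2⟩
    refine ⟨⟨fun i => inc W i ω, ?_⟩, fun i => rfl⟩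
    have hcyl : ω ∈ cyl W (fun i : Fin m => inc W i ω) := fun i => rfl
    constructor
    · rw [← psum_eq_pfsum W hcyl (le_refl m)]; exact h1
    · intro j hj1 hj2
      rw [← psum_eq_pfsum W hcyl (le_of_lt hj2)]
      exact h2 j hj1 hj2
  · rintro ⟨⟨f, hf1, hf2⟩, hω⟩
    constructor
    · rw [psum_eq_pfsum W hω (le_refl m)]; exact hf1
    · intro j hj1 hj2
      rw [psum_eq_pfsum W hω (le_of_lt hj2)]
      exact hf2 j hj1 hj2

lemma measure_hits_inter (hW : IsSRW μ d W) (x : Zd d) (C : Set (Zd d)) (a : Zd d) (m : ℕ)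
    {Z : Set Ω} (hZ : MeasurableSet Z) :
    μ (hitsAtE W x C a m ∩ Z) = ∑' f : {f : Fin m → Zd d // Phi x C a m f}, μ (cyl W f.1 ∩ Z) := by
  rw [hitsAtE_eq_iUnion, Set.iUnion_inter]
  refine measure_iUnion ?_ fun f => (cyl_measurableSet μ W hW f.1).inter hZ
  intro f g hfg
  exact ((cyl_disjoint W (Subtype.coe_injective.ne hfg)).mono
    Set.inter_subset_left Set.inter_subset_left)

lemma measure_hitsAt (hW : IsSRW μ d W) (x : Zd d) (C : Set (Zd d)) (a : Zd d) (m : ℕ) :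
    μ (hitsAtE W x C a m) =
      ∑' f : {f : Fin m → Zd d // Phi x C a m f}, ∏ i, stepP d (f.1 i) := by
  have := measure_hits_inter μ W hW x C a m MeasurableSet.univ
  simp only [Set.inter_univ] at this
  rw [this]
  exact tsum_congr fun f => measure_cyl μ W hW f.1

end Cyl


section Markov

lemma psum_zero (ω : Ω) : psum W 0 ω = 0 := by simp [psum]

lemma psum_shift (m k : ℕ) (ω : Ω) :
    psum W (m + k) ω - psum W m ω = ∑ i ∈ Finset.range k, inc W (m + i) ω := by
  unfold psum
  rw [Finset.sum_range_add]
  abel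

lemma meas_shiftPre (hW : IsSRW μ d W) (m K : ℕ) (T : Set (Fin K → Zd d)) :
    MeasurableSet {ω | (fun j : Fin K => inc W (m + (j : ℕ)) ω) ∈ T} := by
  have : Measurable (fun ω => (fun j : Fin K => inc W (m + (j : ℕ)) ω)) :=
    measurable_pi_lambda _ fun j => meas_inc μ W hW (m + (j : ℕ))
  exact this .of_discrete

lemma meas_avoidE (hW : IsSRW μ d W) (x : Zd d) (A : Set (Zd d)) :
    MeasurableSet (avoidE W x A) := by
  have : avoidE W x A = ⋂ k : ℕ, ⋂ _ : 1 ≤ k, (fun ω => x + psum W k ω) ⁻¹' Aᶜ := by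
    ext ω; simp [avoidE]
  rw [this]
  exact .iInter fun k => .iInter fun _ =>
    ((measurable_const.add (meas_psum μ W hW k)) .of_discrete)

lemma meas_blockE (hW : IsSRW μ d W) (m K : ℕ) (a : Zd d) (D : Set (Zd d)) :
    MeasurableSet (blockE W m K a D) := by
  have : blockE W m K a D = ⋂ k : ℕ, ⋂ _ : 1 ≤ k, ⋂ _ : k ≤ K,
      (fun ω => a + (psum W (m + k) ω - psum W m ω)) ⁻¹' Dᶜ := by
    ext ω; simp [blockE]
  rw [this]
  exact .iInter fun k => .iInter fun _ => .iInter fun _ =>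
    ((measurable_const.add ((meas_psum μ W hW (m + k)).sub (meas_psum μ W hW m))) .of_discrete)

lemma meas_avoidFromE (hW : IsSRW μ d W) (m : ℕ) (a : Zd d) (D : Set (Zd d)) :
    MeasurableSet (avoidFromE W m a D) := by
  have : avoidFromE W m a D = ⋂ k : ℕ, ⋂ _ : 1 ≤ k,
      (fun ω => a + (psum W (m + k) ω - psum W m ω)) ⁻¹' Dᶜ := by
    ext ω; simp [avoidFromE]
  rw [this]
  exact .iInter fun k => .iInter fun _ =>
    ((measurable_const.add ((meas_psum μ W hW (m + k)).sub (meas_psum μ W hW m))) .of_discrete)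

lemma meas_hitsAtE (hW : IsSRW μ d W) (x : Zd d) (C : Set (Zd d)) (a : Zd d) (m : ℕ) :
    MeasurableSet (hitsAtE W x C a m) := by
  have : hitsAtE W x C a m = ((fun ω => x + psum W m ω) ⁻¹' {a}) ∩
      ⋂ j : ℕ, ⋂ _ : 1 ≤ j, ⋂ _ : j < m, (fun ω => x + psum W j ω) ⁻¹' Cᶜ := by
    ext ω; simp [hitsAtE]
  rw [this]
  exact ((measurable_const.add (meas_psum μ W hW m)) .of_discrete).inter
    (.iInter fun j => .iInter fun _ => .iInter fun _ =>
      ((measurable_const.add (meas_psum μ W hW j)) .of_discrete))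

/-- decomposition of an arbitrary measurable event over cylinders -/
lemma measure_eq_tsum_cyl (hW : IsSRW μ d W) (m : ℕ) {Z : Set Ω} (hZ : MeasurableSet Z) :
    μ Z = ∑' f : Fin m → Zd d, μ (cyl W f ∩ Z) := by
  have hU : (⋃ f : Fin m → Zd d, cyl W f ∩ Z) = Z := by
    ext ω
    simp only [Set.mem_iUnion, Set.mem_inter_iff]
    constructor
    · rintro ⟨f, _, h⟩; exact h
    · intro h; exact ⟨fun i => inc W i ω, fun i => rfl, h⟩
  calc μ Z = μ (⋃ f : Fin m → Zd d, cyl W f ∩ Z) := by rw [hU]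
    _ = ∑' f : Fin m → Zd d, μ (cyl W f ∩ Z) := measure_iUnion
      (fun f g hfg => (cyl_disjoint W hfg).mono Set.inter_subset_left Set.inter_subset_left)
      (fun f => (cyl_measurableSet μ W hW f).inter hZ)

lemma tsum_prod_stepP_eq_one (hW : IsSRW μ d W) (m : ℕ) :
    ∑' f : Fin m → Zd d, ∏ i, stepP d (f i) = 1 := by
  have := measure_eq_tsum_cyl μ W hW m (Z := Set.univ) MeasurableSet.univ
  simp only [Set.inter_univ, measure_univ] at this
  calc ∑' f : Fin m → Zd d, ∏ i, stepP d (f i)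
      = ∑' f : Fin m → Zd d, μ (cyl W f) := tsum_congr fun f => (measure_cyl μ W hW f).symm
    _ = 1 := this.symm

/-- probability of the shifted cylinder -/
lemma measure_shift_cyl (hW : IsSRW μ d W) (m K : ℕ) (g : Fin K → Zd d) :
    μ {ω | ∀ j : Fin K, inc W (m + (j : ℕ)) ω = g j} = ∏ j, stepP d (g j) := by
  have hmeas : MeasurableSet {ω | ∀ j : Fin K, inc W (m + (j : ℕ)) ω = g j} := by
    have : {ω | ∀ j : Fin K, inc W (m + (j : ℕ)) ω = g j}
        = {ω | (fun j : Fin K => inc W (m + (j : ℕ)) ω) ∈ ({g} : Set (Fin K → Zd d))} := by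
      ext ω; simp [funext_iff]
    rw [this]; exact meas_shiftPre μ W hW m K _
  rw [measure_eq_tsum_cyl μ W hW m hmeas]
  have : ∀ f : Fin m → Zd d, μ (cyl W f ∩ {ω | ∀ j : Fin K, inc W (m + (j : ℕ)) ω = g j})
      = (∏ i, stepP d (f i)) * ∏ j, stepP d (g j) :=
    fun f => measure_cyl_inter_block μ W hW m K f g
  rw [tsum_congr this, ENNReal.tsum_mul_right, tsum_prod_stepP_eq_one μ W hW m, one_mul]

/-- probability of a shifted block event does not depend on the shift -/
lemma measure_shiftPre (hW : IsSRW μ d W) (m K : ℕ) (T : Set (Fin K → Zd d)) :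
    μ {ω | (fun j : Fin K => inc W (m + (j : ℕ)) ω) ∈ T}
      = ∑' g : T, ∏ j, stepP d (g.1 j) := by
  have hU : {ω | (fun j : Fin K => inc W (m + (j : ℕ)) ω) ∈ T}
      = ⋃ g : T, {ω | ∀ j : Fin K, inc W (m + (j : ℕ)) ω = g.1 j} := by
    ext ω
    simp only [Set.mem_setOf_eq, Set.mem_iUnion]
    constructor
    · intro h; exact ⟨⟨_, h⟩, fun j => rfl⟩
    · rintro ⟨⟨g, hg⟩, h⟩
      have : (fun j : Fin K => inc W (m + (j : ℕ)) ω) = g := funext h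
      rw [this]; exact hg
  rw [hU, measure_iUnion]
  · exact tsum_congr fun g => measure_shift_cyl μ W hW m K g.1
  · intro g g' hgg'
    rw [Function.onFun, Set.disjoint_left]
    intro ω h1 h2
    exact hgg' (Subtype.ext (funext fun j => (h1 j).symm.trans (h2 j)))
  · intro g
    have : {ω | ∀ j : Fin K, inc W (m + (j : ℕ)) ω = g.1 j}
        = {ω | (fun j : Fin K => inc W (m + (j : ℕ)) ω) ∈ ({g.1} : Set (Fin K → Zd d))} := by
      ext ω; simp [funext_iff]
    rw [this]; exact meas_shiftPre μ W hW m K _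

lemma measure_cyl_inter_pre (hW : IsSRW μ d W) (m K : ℕ) (f : Fin m → Zd d)
    (T : Set (Fin K → Zd d)) :
    μ (cyl W f ∩ {ω | (fun j : Fin K => inc W (m + (j : ℕ)) ω) ∈ T})
      = (∏ i, stepP d (f i)) * μ {ω | (fun j : Fin K => inc W ((j : ℕ)) ω) ∈ T} := by
  have hU : cyl W f ∩ {ω | (fun j : Fin K => inc W (m + (j : ℕ)) ω) ∈ T}
      = ⋃ g : T, (cyl W f ∩ {ω | ∀ j : Fin K, inc W (m + (j : ℕ)) ω = g.1 j}) := by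
    ext ω
    simp only [Set.mem_inter_iff, Set.mem_setOf_eq, Set.mem_iUnion]
    constructor
    · rintro ⟨h1, h2⟩; exact ⟨⟨_, h2⟩, h1, fun j => rfl⟩
    · rintro ⟨⟨g, hg⟩, h1, h2⟩
      refine ⟨h1, ?_⟩
      have : (fun j : Fin K => inc W (m + (j : ℕ)) ω) = g := funext h2
      rw [this]; exact hg
  rw [hU, measure_iUnion]
  · have h0 : μ {ω | (fun j : Fin K => inc W ((j : ℕ)) ω) ∈ T}
        = ∑' g : T, ∏ j, stepP d (g.1 j) := by
      have := measure_shiftPre μ W hW 0 K T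
      simpa using this
    rw [h0, tsum_congr (fun g : T => measure_cyl_inter_block μ W hW m K f g.1),
      ENNReal.tsum_mul_left]
  · intro g g' hgg'
    rw [Function.onFun, Set.disjoint_left]
    rintro ω ⟨_, h1⟩ ⟨_, h2⟩
    exact hgg' (Subtype.ext (funext fun j => (h1 j).symm.trans (h2 j)))
  · intro g
    refine (cyl_measurableSet μ W hW f).inter ?_
    have : {ω | ∀ j : Fin K, inc W (m + (j : ℕ)) ω = g.1 j}
        = {ω | (fun j : Fin K => inc W (m + (j : ℕ)) ω) ∈ ({g.1} : Set (Fin K → Zd d))} := by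
      ext ω; simp [funext_iff]
    rw [this]; exact meas_shiftPre μ W hW m K _

end Markov


section AvoidFrom

/-- block condition on increment vectors -/
def TK (a : Zd d) (D : Set (Zd d)) (K : ℕ) : Set (Fin K → Zd d) :=
  {g | ∀ k, 1 ≤ k → k ≤ K → a + pfsum g k ∉ D}

lemma pfsum_of_inc (m K : ℕ) (ω : Ω) {k : ℕ} (hk : k ≤ K) :
    pfsum (fun j : Fin K => inc W (m + (j : ℕ)) ω) k = psum W (m + k) ω - psum W m ω := by
  rw [psum_shift]
  unfold pfsum
  refine Finset.sum_congr rfl fun i hi => ?_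
  rw [Finset.mem_range] at hi
  have hiK : i < K := lt_of_lt_of_le hi hk
  simp [fext, hiK]

lemma blockE_eq_pre (m K : ℕ) (a : Zd d) (D : Set (Zd d)) :
    blockE W m K a D = {ω | (fun j : Fin K => inc W (m + (j : ℕ)) ω) ∈ TK a D K} := by
  ext ω
  simp only [blockE, TK, Set.mem_setOf_eq]
  constructor
  · intro h k h1 h2
    rw [pfsum_of_inc W m K ω h2]
    exact h k h1 h2
  · intro h k h1 h2
    have := h k h1 h2
    rwa [pfsum_of_inc W m K ω h2] at this

lemma avoidFromE_eq_iInter (m : ℕ) (a : Zd d) (D : Set (Zd d)) :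
    avoidFromE W m a D = ⋂ K : ℕ, blockE W m K a D := by
  ext ω
  simp only [avoidFromE, blockE, Set.mem_iInter, Set.mem_setOf_eq]
  constructor
  · intro h K k h1 _; exact h k h1
  · intro h k h1; exact h k k h1 le_rfl

lemma avoidE_eq_avoidFrom_zero (a : Zd d) (D : Set (Zd d)) :
    avoidE W a D = avoidFromE W 0 a D := by
  ext ω
  simp only [avoidE, avoidFromE, Set.mem_setOf_eq, psum_zero, zero_add, sub_zero]

lemma blockE_antitone (m : ℕ) (a : Zd d) (D : Set (Zd d)) :
    Antitone (fun K => blockE W m K a D) := by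
  intro K K' hKK' ω hω k h1 h2
  exact hω k h1 (le_trans h2 hKK')

lemma prod_stepP_ne_top (hW : IsSRW μ d W) {m : ℕ} (f : Fin m → Zd d) :
    (∏ i, stepP d (f i)) ≠ ∞ := by
  refine ne_top_of_le_ne_top ENNReal.one_ne_top ?_
  exact Finset.prod_le_one (fun i _ => zero_le) (fun i _ => stepP_le_one μ W hW (f i))

lemma cyl_inter_avoidFrom (hW : IsSRW μ d W) (m : ℕ) (f : Fin m → Zd d) (a : Zd d)
    (D : Set (Zd d)) :
    μ (cyl W f ∩ avoidFromE W m a D) = (∏ i, stepP d (f i)) * μ (avoidE W a D) := by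
  have h1 : cyl W f ∩ avoidFromE W m a D = ⋂ K : ℕ, (cyl W f ∩ blockE W m K a D) := by
    rw [avoidFromE_eq_iInter, Set.inter_iInter]
  have hanti : Antitone fun K => cyl W f ∩ blockE W m K a D :=
    fun K K' h => Set.inter_subset_inter_right _ (blockE_antitone W m a D h)
  rw [h1, Directed.measure_iInter
    (fun K => ((cyl_measurableSet μ W hW f).inter (meas_blockE μ W hW m K a D)).nullMeasurableSet)
    hanti.directed_ge ⟨0, measure_ne_top μ _⟩]
  have key : ∀ K, μ (cyl W f ∩ blockE W m K a D)
      = (∏ i, stepP d (f i)) * μ (blockE W 0 K a D) := by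
    intro K
    rw [blockE_eq_pre W m K a D, measure_cyl_inter_pre μ W hW m K f (TK a D K),
      blockE_eq_pre W 0 K a D]
    congr 2
    ext ω
    simp only [Set.mem_setOf_eq, zero_add]
  rw [iInf_congr key]
  have h2 : μ (avoidE W a D) = ⨅ K : ℕ, μ (blockE W 0 K a D) := by
    rw [avoidE_eq_avoidFrom_zero, avoidFromE_eq_iInter]
    exact Directed.measure_iInter
      (fun K => (meas_blockE μ W hW 0 K a D).nullMeasurableSet)
      (blockE_antitone W 0 a D).directed_ge ⟨0, measure_ne_top μ _⟩
  rw [h2]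
  exact (ENNReal.mul_iInf' (fun h => absurd h (prod_stepP_ne_top μ W hW f))
    (fun _ => ⟨0⟩)).symm

/-- Markov property at a first-hitting event -/
lemma measure_hits_inter_avoidFrom (hW : IsSRW μ d W) (x : Zd d) (C : Set (Zd d)) (a : Zd d)
    (m : ℕ) (D : Set (Zd d)) :
    μ (hitsAtE W x C a m ∩ avoidFromE W m a D)
      = μ (hitsAtE W x C a m) * μ (avoidE W a D) := by
  rw [measure_hits_inter μ W hW x C a m (meas_avoidFromE μ W hW m a D),
    measure_hitsAt μ W hW x C a m,
    tsum_congr (fun g : {f : Fin m → Zd d // Phi x C a m f} =>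
      cyl_inter_avoidFrom μ W hW m g.1 a D),
    ENNReal.tsum_mul_right]

end AvoidFrom

section Reversal

lemma revF_revF {m : ℕ} (f : Fin m → Zd d) : revF (revF f) = f := by
  funext i
  simp [revF, Fin.rev_rev]

lemma pfsum_zero' {m : ℕ} (f : Fin m → Zd d) : pfsum f 0 = 0 := by simp [pfsum]

lemma pfsum_rev {m : ℕ} (f : Fin m → Zd d) :
    ∀ k, k ≤ m → pfsum (revF f) k = pfsum f (m - k) - pfsum f m := by
  intro k
  induction k with
  | zero => intro _; simp [pfsum]
  | succ k ih =>
    intro hk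
    have hk' : k ≤ m := by omega
    have step : pfsum (revF f) (k + 1) = pfsum (revF f) k + fext (revF f) k := by
      unfold pfsum; rw [Finset.sum_range_succ]
    rw [step, ih hk']
    have h1 : m - k = (m - (k + 1)) + 1 := by omega
    have h3 : pfsum f (m - k) = pfsum f (m - (k + 1)) + fext f (m - (k + 1)) := by
      rw [h1]; unfold pfsum; rw [Finset.sum_range_succ]
    have h2 : fext (revF f) k = - fext f (m - (k + 1)) := by
      have hkm : k < m := by omega
      have hkm2 : m - (k + 1) < m := by omega
      have h4 : ((⟨k, hkm⟩ : Fin m).rev : ℕ) = m - (k + 1) := by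
        simp [Fin.rev]
      have h5 : (⟨k, hkm⟩ : Fin m).rev = ⟨m - (k + 1), hkm2⟩ := Fin.ext h4
      simp only [fext, dif_pos hkm, dif_pos hkm2, revF, h5]
    rw [h3, h2]
    abel

lemma Phi_rev {x a : Zd d} {C : Set (Zd d)} {m : ℕ} {f : Fin m → Zd d}
    (hf : Phi x C a m f) : Phi a C x m (revF f) := by
  obtain ⟨hf1, hf2⟩ := hf
  have hm : pfsum (revF f) m = - pfsum f m := by
    rw [pfsum_rev f m le_rfl, Nat.sub_self, pfsum_zero', zero_sub]
  constructor
  · rw [hm, ← hf1]; abel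
  · intro j h1 h2
    rw [pfsum_rev f j (le_of_lt h2)]
    have : a + (pfsum f (m - j) - pfsum f m) = x + pfsum f (m - j) := by
      rw [← hf1]; abel
    rw [this]
    exact hf2 (m - j) (by omega) (by omega)

lemma prod_rev {m : ℕ} (f : Fin m → Zd d) :
    ∏ i, stepP d (revF f i) = ∏ i, stepP d (f i) := by
  calc ∏ i, stepP d (revF f i) = ∏ i, stepP d (f i.rev) :=
        Finset.prod_congr rfl fun i _ => by
          rw [show revF f i = -(f i.rev) from rfl, stepP_symm]
    _ = ∏ i, stepP d (f i) := by
        refine Finset.prod_bijective Fin.rev Fin.rev_involutive.bijective (by simp) ?_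
        intro i _
        rfl

lemma measure_hitsAt_rev (hW : IsSRW μ d W) (x : Zd d) (C : Set (Zd d)) (a : Zd d) (m : ℕ) :
    μ (hitsAtE W x C a m) = μ (hitsAtE W a C x m) := by
  rw [measure_hitsAt μ W hW x C a m, measure_hitsAt μ W hW a C x m]
  rw [← Equiv.tsum_eq
    (⟨fun f => ⟨revF f.1, Phi_rev f.2⟩, fun f => ⟨revF f.1, Phi_rev f.2⟩,
      fun f => Subtype.ext (revF_revF f.1), fun f => Subtype.ext (revF_revF f.1)⟩ :
      {f : Fin m → Zd d // Phi x C a m f} ≃ {f : Fin m → Zd d // Phi a C x m f})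
    (fun f : {f : Fin m → Zd d // Phi a C x m f} => ∏ i, stepP d (f.1 i))]
  refine tsum_congr fun f => ?_
  show ∏ i, stepP d (f.1 i) = ∏ i, stepP d (revF f.1 i)
  exact (prod_rev f.1).symm

end Reversal


section Decomp

lemma shift_point {x y : Zd d} {ω : Ω} {m k : ℕ} (hm : x + psum W m ω = y) :
    y + (psum W (m + k) ω - psum W m ω) = x + psum W (m + k) ω := by
  rw [← hm]; abel

lemma hitsAt_disjoint_avoid (x y : Zd d) (C : Set (Zd d)) (hy : y ∈ C) (m : ℕ) :
    Disjoint (avoidE W x C) (hitsAtE W x C y (m + 1)) := by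
  rw [Set.disjoint_left]
  rintro ω hav ⟨h1, _⟩
  exact hav (m + 1) (by omega) (h1 ▸ hy)

lemma hitsAt_disjoint_time {x a a' : Zd d} {C : Set (Zd d)} (ha : a ∈ C) (ha' : a' ∈ C)
    {m m' : ℕ} (h : ¬ (m = m' ∧ a = a')) :
    Disjoint (hitsAtE W x C a (m + 1)) (hitsAtE W x C a' (m' + 1)) := by
  rw [Set.disjoint_left]
  rintro ω ⟨h1, h2⟩ ⟨h1', h2'⟩
  rcases Nat.lt_trichotomy m m' with hlt | heq | hgt
  · exact h2' (m + 1) (by omega) (by omega) (h1 ▸ ha)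
  · subst heq
    exact h ⟨rfl, h1.symm.trans h1'⟩
  · exact h2 (m' + 1) (by omega) (by omega) (h1' ▸ ha')

lemma avoid_decompose (x y : Zd d) (B : Set (Zd d)) (hy : y ∉ B) :
    avoidE W x B = avoidE W x (insert y B) ∪
      ⋃ m : ℕ, (hitsAtE W x (insert y B) y (m + 1) ∩ avoidFromE W (m + 1) y B) := by
  classical
  ext ω
  simp only [Set.mem_union, Set.mem_iUnion]
  constructor
  · intro h
    by_cases hhit : ∃ k, 1 ≤ k ∧ x + psum W k ω = y
    · right
      set m0 := Nat.find hhit with hm0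
      obtain ⟨hm1, hm2⟩ := Nat.find_spec hhit
      have hm0pos : 1 ≤ m0 := hm1
      refine ⟨m0 - 1, ⟨?_, ?_⟩, ?_⟩
      · rw [show m0 - 1 + 1 = m0 by omega]; exact hm2
      · intro j hj1 hj2
        rw [show m0 - 1 + 1 = m0 by omega] at hj2
        rw [Set.mem_insert_iff]
        push_neg
        refine ⟨?_, h j hj1⟩
        intro hjy
        exact Nat.find_min hhit hj2 ⟨hj1, hjy⟩
      · intro k hk
        rw [show m0 - 1 + 1 = m0 by omega, shift_point W hm2]
        exact h (m0 + k) (by omega)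
    · left
      intro k hk
      rw [Set.mem_insert_iff]
      push_neg
      exact ⟨fun hky => hhit ⟨k, hk, hky⟩, h k hk⟩
  · intro h k hk
    rcases h with h | ⟨m, ⟨h1, h2⟩, hpost⟩
    · intro hkB
      exact h k hk (Set.mem_insert_iff.2 (Or.inr hkB))
    · rcases Nat.lt_trichotomy k (m + 1) with hlt | heq | hgt
      · intro hkB
        exact h2 k hk hlt (Set.mem_insert_iff.2 (Or.inr hkB))
      · rw [heq, h1]; exact hy
      · have := hpost (k - (m + 1)) (by omega)
        rw [shift_point W h1, show m + 1 + (k - (m + 1)) = k by omega] at this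
        exact this

lemma measure_avoid_decompose (hW : IsSRW μ d W) (x y : Zd d) (B : Set (Zd d)) (hy : y ∉ B) :
    μ (avoidE W x B) = μ (avoidE W x (insert y B)) +
      (∑' m : ℕ, μ (hitsAtE W x (insert y B) y (m + 1))) * μ (avoidE W y B) := by
  rw [avoid_decompose W x y B hy]
  have hyC : y ∈ insert y B := Set.mem_insert y B
  have hdisj : Disjoint (avoidE W x (insert y B))
      (⋃ m : ℕ, (hitsAtE W x (insert y B) y (m + 1) ∩ avoidFromE W (m + 1) y B)) := by
    rw [Set.disjoint_iUnion_right]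
    exact fun m => ((hitsAt_disjoint_avoid W x y (insert y B) hyC m).mono_right
      Set.inter_subset_left)
  rw [measure_union hdisj (MeasurableSet.iUnion fun m =>
    (meas_hitsAtE μ W hW x (insert y B) y (m + 1)).inter (meas_avoidFromE μ W hW (m + 1) y B))]
  congr 1
  rw [measure_iUnion
    (fun m m' hmm' => ((hitsAt_disjoint_time W hyC hyC (by simp [hmm'])).mono
      Set.inter_subset_left Set.inter_subset_left))
    (fun m => (meas_hitsAtE μ W hW x (insert y B) y (m + 1)).inter
      (meas_avoidFromE μ W hW (m + 1) y B))]
  rw [tsum_congr (fun m => measure_hits_inter_avoidFrom μ W hW x (insert y B) y (m + 1) B)]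
  rw [ENNReal.tsum_mul_right]

lemma univ_decompose (y : Zd d) (C : Finset (Zd d)) :
    (Set.univ : Set Ω) = avoidE W y ↑C ∪
      ⋃ m : ℕ, ⋃ a ∈ C, hitsAtE W y ↑C a (m + 1) := by
  classical
  ext ω
  simp only [Set.mem_univ, true_iff, Set.mem_union, Set.mem_iUnion]
  by_cases hhit : ∃ k, 1 ≤ k ∧ y + psum W k ω ∈ (C : Set (Zd d))
  · right
    set m0 := Nat.find hhit with hm0
    obtain ⟨hm1, hm2⟩ := Nat.find_spec hhit
    refine ⟨m0 - 1, y + psum W m0 ω, by exact_mod_cast hm2, ?_, ?_⟩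
    · rw [show m0 - 1 + 1 = m0 by omega]
    · intro j hj1 hj2
      rw [show m0 - 1 + 1 = m0 by omega] at hj2
      exact fun hjC => Nat.find_min hhit hj2 ⟨hj1, hjC⟩
  · left
    intro k hk hkC
    exact hhit ⟨k, hk, hkC⟩

lemma measure_univ_decompose (hW : IsSRW μ d W) (y : Zd d) (C : Finset (Zd d)) :
    1 = μ (avoidE W y ↑C) + ∑ a ∈ C, ∑' m : ℕ, μ (hitsAtE W y ↑C a (m + 1)) := by
  classical
  have hdisj : Disjoint (avoidE W y ↑C)
      (⋃ m : ℕ, ⋃ a ∈ C, hitsAtE W y ↑C a (m + 1)) := by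
    rw [Set.disjoint_iUnion_right]
    intro m
    rw [Set.disjoint_iUnion_right]
    intro a
    rw [Set.disjoint_iUnion_right]
    intro ha
    exact hitsAt_disjoint_avoid W y a ↑C ha m
  have hmeasU : ∀ m : ℕ, MeasurableSet (⋃ a ∈ C, hitsAtE W y (↑C : Set (Zd d)) a (m + 1)) :=
    fun m => MeasurableSet.biUnion C.countable_toSet
      (fun a _ => meas_hitsAtE μ W hW y ↑C a (m + 1))
  have hdisjm : Pairwise (Function.onFun Disjoint
      (fun m : ℕ => ⋃ a ∈ C, hitsAtE W y (↑C : Set (Zd d)) a (m + 1))) := by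
    intro m m' hmm'
    rw [Function.onFun, Set.disjoint_left]
    simp only [Set.mem_iUnion]
    rintro ω ⟨a, ha, hω⟩ ⟨a', ha', hω'⟩
    exact Set.disjoint_left.1 (hitsAt_disjoint_time W (x := y) ha ha'
      (by simp [hmm'])) hω hω'
  calc (1 : ℝ≥0∞) = μ Set.univ := measure_univ.symm
    _ = μ (avoidE W y ↑C ∪ ⋃ m : ℕ, ⋃ a ∈ C, hitsAtE W y ↑C a (m + 1)) := by
        rw [← univ_decompose W y C]
    _ = μ (avoidE W y ↑C) + μ (⋃ m : ℕ, ⋃ a ∈ C, hitsAtE W y ↑C a (m + 1)) :=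
        measure_union hdisj (MeasurableSet.iUnion hmeasU)
    _ = μ (avoidE W y ↑C) + ∑ a ∈ C, ∑' m : ℕ, μ (hitsAtE W y ↑C a (m + 1)) := by
        congr 1
        rw [measure_iUnion hdisjm hmeasU]
        rw [tsum_congr (fun m => measure_biUnion_finset
          (fun a ha a' ha' haa' => hitsAt_disjoint_time W (x := y) ha ha'
            (fun hc => haa' hc.2))
          (fun a _ => meas_hitsAtE μ W hW y ↑C a (m + 1)))]
        exact Summable.tsum_finsetSum (fun a _ => ENNReal.summable)

end Decomp


section KeyStep

lemma cap_step (hW : IsSRW μ d W) (B : Finset (Zd d)) (y : Zd d) (hy : y ∉ B) :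
    ∑ a ∈ insert y B, (μ (avoidE W a ↑(insert y B))).toReal
      = ∑ a ∈ B, (μ (avoidE W a ↑B)).toReal
        + (μ (avoidE W y ↑(insert y B))).toReal * (μ (avoidE W y ↑B)).toReal := by
  classical
  have hyB : y ∉ (↑B : Set (Zd d)) := by exact_mod_cast hy
  have hC : ((insert y B : Finset (Zd d)) : Set (Zd d)) = insert y ↑B := Finset.coe_insert y B
  rw [hC]
  set R : Zd d → ℝ≥0∞ := fun a => ∑' m : ℕ, μ (hitsAtE W y (insert y ↑B) a (m + 1)) with hR
  have hRle : ∀ a ∈ insert y (↑B : Set (Zd d)), R a ≤ 1 := by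
    intro a ha
    have : R a = μ (⋃ m : ℕ, hitsAtE W y (insert y ↑B) a (m + 1)) := by
      rw [measure_iUnion
        (fun m m' h => hitsAt_disjoint_time W ha ha (by simp [h]))
        (fun m => meas_hitsAtE μ W hW y (insert y ↑B) a (m + 1))]
    rw [this]
    exact prob_le_one
  have hRfin : ∀ a ∈ insert y (↑B : Set (Zd d)), R a ≠ ∞ :=
    fun a ha => ne_top_of_le_ne_top ENNReal.one_ne_top (hRle a ha)
  have hE1 : ∀ a : Zd d, μ (avoidE W a ↑B)
      = μ (avoidE W a (insert y ↑B)) + R a * μ (avoidE W y ↑B) := by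
    intro a
    rw [measure_avoid_decompose μ W hW a y ↑B hyB, hR]
    congr 2
    exact tsum_congr fun m => measure_hitsAt_rev μ W hW a (insert y ↑B) y (m + 1)
  have hE3 : (1 : ℝ≥0∞) = μ (avoidE W y (insert y ↑B)) + ∑ a ∈ insert y B, R a := by
    have := measure_univ_decompose μ W hW y (insert y B)
    rw [hC] at this
    exact this
  -- real versions
  set v := (μ (avoidE W y ↑B)).toReal with hv
  set w := (μ (avoidE W y (insert y ↑B))).toReal with hw
  have e1 : ∀ a ∈ insert y (↑B : Set (Zd d)), (μ (avoidE W a ↑B)).toReal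
      = (μ (avoidE W a (insert y ↑B))).toReal + (R a).toReal * v := by
    intro a ha
    rw [hE1 a, ENNReal.toReal_add (measure_ne_top μ _)
      (ENNReal.mul_ne_top (hRfin a ha) (measure_ne_top μ _)), ENNReal.toReal_mul]
  have hSfin : ∑ a ∈ insert y B, R a ≠ ∞ := by
    refine ne_top_of_le_ne_top ENNReal.one_ne_top ?_
    rw [hE3]
    exact le_add_self
  have e3 : (1 : ℝ) = w + ∑ a ∈ insert y B, (R a).toReal := by
    have := congrArg ENNReal.toReal hE3
    rwa [ENNReal.toReal_one, ENNReal.toReal_add (measure_ne_top μ _) hSfin,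
      ENNReal.toReal_sum (fun a ha => by
        refine hRfin a ?_
        rw [← hC]; exact_mod_cast ha)] at this
  have hmemy : y ∈ insert y (↑B : Set (Zd d)) := Set.mem_insert y ↑B
  have e2 : v = w + (R y).toReal * v := e1 y hmemy
  have hsum1 : ∑ a ∈ insert y B, (μ (avoidE W a (insert y ↑B))).toReal
      = w + ∑ a ∈ B, (μ (avoidE W a (insert y ↑B))).toReal := Finset.sum_insert hy
  have hsum2 : ∑ a ∈ insert y B, (R a).toReal
      = (R y).toReal + ∑ a ∈ B, (R a).toReal := Finset.sum_insert hy
  have hsumB : ∑ a ∈ B, (μ (avoidE W a ↑B)).toReal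
      = ∑ a ∈ B, (μ (avoidE W a (insert y ↑B))).toReal + (∑ a ∈ B, (R a).toReal) * v := by
    rw [Finset.sum_mul, ← Finset.sum_add_distrib]
    refine Finset.sum_congr rfl fun a ha => ?_
    exact e1 a (Set.mem_insert_iff.2 (Or.inr (by exact_mod_cast ha)))
  set Sc := ∑ a ∈ B, (μ (avoidE W a (insert y ↑B))).toReal
  set Srb := ∑ a ∈ B, (R a).toReal
  set ry := (R y).toReal
  -- target : w + Sc = (Sc + Srb * v) ... linear algebra
  rw [hsum1, hsumB]
  have e3' : (1 : ℝ) = w + (ry + Srb) := by rw [e3, hsum2]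
  linear_combination v * e3' - e2

end KeyStep


section Final

lemma psum_eq_W {ω : Ω} (hω : W ω 0 = 0) (k : ℕ) : psum W k ω = W ω k := by
  unfold psum inc
  rw [Finset.sum_range_sub (fun i => W ω i) k, hω, sub_zero]

lemma escProb_eq (hW : IsSRW μ d W) (x : Zd d) (A : Set (Zd d)) :
    escProb μ W x A = (μ (avoidE W x A)).toReal := by
  unfold escProb
  congr 1
  apply measure_congr
  rw [eventuallyEq_set]
  filter_upwards [hW.start] with ω h0
  constructor
  · intro h k hk
    rw [psum_eq_W W h0 k]
    exact h k hk
  · intro h k hk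
    have := h k hk
    rwa [psum_eq_W W h0 k] at this

end Final

end Dev

/-- **Capacity decomposition (Lemma 3.3).**
For a finite set `A = {x_1, …, x_n} ⊂ ℤ^d` (`d ≥ 3`) of distinct points,
`Cap(A) = ∑_{k=1}^n P_{x_k}(W[1,∞) ∩ {x_1,…,x_k} = ∅) ⬝ P_{x_k}(W[1,∞) ∩ {x_1,…,x_{k−1}} = ∅)`. -/


theorem capacity_decomposition
    (d : ℕ) (hd : 3 ≤ d)
    {ΩW : Type*} [MeasurableSpace ΩW] (μW : Measure ΩW) [IsProbabilityMeasure μW]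
    (W : ΩW → ℕ → Zd d) (hW : IsSRW μW d W)
    (n : ℕ) (x : Fin n → Zd d) (hx : Function.Injective x) :
    cap μW W (Finset.univ.image x) =
      ∑ k : Fin n,
        escProb μW W (x k) ↑((Finset.univ.filter fun i => i ≤ k).image x) *
        escProb μW W (x k) ↑((Finset.univ.filter fun i => i < k).image x) := by
  classical
  set Bk : ℕ → Finset (Zd d) := fun k => (Finset.univ.filter fun i : Fin n => (i : ℕ) < k).image x
    with hBk
  have main : ∀ k : ℕ, k ≤ n →
      ∑ a ∈ Bk k, (μW (avoidE W a ↑(Bk k))).toReal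
        = ∑ i ∈ Finset.univ.filter (fun i : Fin n => (i : ℕ) < k),
            (μW (avoidE W (x i) ↑((Finset.univ.filter fun j => j ≤ i).image x))).toReal *
            (μW (avoidE W (x i) ↑((Finset.univ.filter fun j => j < i).image x))).toReal := by
    intro k
    induction k with
    | zero => intro _; simp [hBk]
    | succ k ih =>
      intro hk
      have hkn : k < n := hk
      set i0 : Fin n := ⟨k, hkn⟩ with hi0
      have hi0v : (i0 : ℕ) = k := rfl
      have hBsucc : Bk (k + 1) = insert (x i0) (Bk k) := by
        ext z
        simp only [hBk, Finset.mem_image, Finset.mem_insert, Finset.mem_filter,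
          Finset.mem_univ, true_and]
        constructor
        · rintro ⟨i, hik, rfl⟩
          by_cases hieq : (i : ℕ) = k
          · left; exact congrArg x (Fin.ext (hieq.trans hi0v.symm))
          · right; exact ⟨i, by omega, rfl⟩
        · rintro (rfl | ⟨i, hik, rfl⟩)
          · exact ⟨i0, by omega, rfl⟩
          · exact ⟨i, by omega, rfl⟩
      have hnotmem : x i0 ∉ Bk k := by
        simp only [hBk, Finset.mem_image, Finset.mem_filter, Finset.mem_univ, true_and]
        rintro ⟨i, hik, hxi⟩
        have hii : i = i0 := hx hxi
        rw [hii, hi0v] at hik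
        exact lt_irrefl k hik
      have hfilter : (Finset.univ.filter fun i : Fin n => (i : ℕ) < k + 1)
          = insert i0 (Finset.univ.filter fun i : Fin n => (i : ℕ) < k) := by
        ext i
        simp only [Finset.mem_filter, Finset.mem_univ, true_and, Finset.mem_insert, Fin.ext_iff,
          hi0v]
        omega
      have hi0notin : i0 ∉ Finset.univ.filter (fun i : Fin n => (i : ℕ) < k) := by
        simp only [Finset.mem_filter, Finset.mem_univ, true_and, not_lt, hi0v]
        exact le_refl k
      have hflt1 : (Finset.univ.filter fun j : Fin n => j ≤ i0)
          = (Finset.univ.filter fun i : Fin n => (i : ℕ) < k + 1) := by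
        ext j
        simp only [Finset.mem_filter, Finset.mem_univ, true_and, Fin.le_def]
        show (j : ℕ) ≤ (i0 : ℕ) ↔ (j : ℕ) < k + 1
        rw [hi0v]
        omega
      have hset1 : insert (x i0) (Bk k) = (Finset.univ.filter fun j : Fin n => j ≤ i0).image x := by
        rw [hflt1, ← hBsucc, hBk]
      have hflt2 : (Finset.univ.filter fun j : Fin n => j < i0)
          = (Finset.univ.filter fun i : Fin n => (i : ℕ) < k) := by
        ext j
        simp [Fin.lt_def, hi0v]
      have hset2 : Bk k = (Finset.univ.filter fun j : Fin n => j < i0).image x := by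
        rw [hflt2, hBk]
      rw [hBsucc, cap_step μW W hW (Bk k) (x i0) hnotmem, ih (le_of_lt hk), hfilter,
        Finset.sum_insert hi0notin, ← hset1, ← hset2, ← hBsucc]
      ring
  have hU : Finset.univ.image x = Bk n := by
    rw [hBk]
    congr 1
    rw [Finset.filter_true_of_mem (fun i _ => i.isLt)]
  have hF : (Finset.univ.filter fun i : Fin n => (i : ℕ) < n) = Finset.univ :=
    Finset.filter_true_of_mem (fun i _ => i.isLt)
  unfold cap
  rw [hU]
  rw [Finset.sum_congr rfl (fun a _ => escProb_eq μW W hW a ↑(Bk n))]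
  rw [main n le_rfl, hF]
  exact Finset.sum_congr rfl fun i _ => by
    rw [escProb_eq μW W hW, escProb_eq μW W hW]


end LERWCap
end

section
/- Let (a_n)_{n∈N} and (b_n)_{n∈N} be strictly increasing sequences with a_n positive integers and b_n positive reals, and let f : N → [0,∞) be a decreasing function such that b_{a_n} · f(a_n) → x as n → ∞. For each n, let k_n be the index such that a_{k_n} ≤ n ≤ a_{k_n + 1}. If b_{a_{k_n}} / b_{a_{k_n + 1}} → 1 as n → ∞, then b_n · f(n) → x as n → ∞. -/
open MeasureTheory ProbabilityTheory Filter Topology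

namespace LERWCap

set_option maxHeartbeats 1000000 in
/-- **From subsequential to full convergence (Lemma 3.5).**
Let `(a_n)` and `(b_n)` be strictly increasing (with `a_n ∈ ℕ`, `b_n > 0` real) and let
`f : ℕ → [0,∞)` be decreasing with `b_{a_n} f(a_n) → x`. If `k_n` satisfies
`a_{k_n} ≤ n ≤ a_{k_n+1}` (for `n ≥ a_1`) and `b_{a_{k_n}}/b_{a_{k_n+1}} → 1`,
then `b_n f(n) → x`. -/
theorem subsequential_to_full_convergence
    (a : ℕ → ℕ) (b : ℕ → ℝ) (f : ℕ → ℝ) (x : ℝ) (k : ℕ → ℕ)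
    (ha : StrictMono a) (hb : StrictMono b) (hbpos : ∀ n, 0 < b n)
    (hf : Antitone f) (hf0 : ∀ n, 0 ≤ f n)
    (hconv : Tendsto (fun n => b (a n) * f (a n)) atTop (𝓝 x))
    (hk : ∀ n, a 1 ≤ n → a (k n) ≤ n ∧ n ≤ a (k n + 1))
    (hratio : Tendsto (fun n => b (a (k n)) / b (a (k n + 1))) atTop (𝓝 1)) :
    Tendsto (fun n => b n * f n) atTop (𝓝 x) := by
  have hk_tendsto : Tendsto k atTop atTop := by
    refine tendsto_atTop.2 fun M => ?_
    filter_upwards [eventually_ge_atTop (a 1), eventually_gt_atTop (a M)] with n hn1 hnM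
    have h2 := (hk n hn1).2
    have : a M < a (k n + 1) := lt_of_lt_of_le hnM h2
    have := ha.lt_iff_lt.mp this
    omega
  have hk1 : Tendsto (fun n => k n + 1) atTop atTop :=
    tendsto_atTop_mono (fun n => Nat.le_succ (k n)) hk_tendsto
  have hc1 : Tendsto (fun n => b (a (k n)) * f (a (k n))) atTop (𝓝 x) :=
    hconv.comp hk_tendsto
  have hc2 : Tendsto (fun n => b (a (k n + 1)) * f (a (k n + 1))) atTop (𝓝 x) :=
    hconv.comp hk1
  have hinv : Tendsto (fun n => b (a (k n + 1)) / b (a (k n))) atTop (𝓝 1) := by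
    have := hratio.inv₀ one_ne_zero
    simpa [inv_div] using this
  have hlow : Tendsto (fun n => (b (a (k n)) / b (a (k n + 1))) *
      (b (a (k n + 1)) * f (a (k n + 1)))) atTop (𝓝 x) := by
    simpa using hratio.mul hc2
  have hup : Tendsto (fun n => (b (a (k n + 1)) / b (a (k n))) *
      (b (a (k n)) * f (a (k n)))) atTop (𝓝 x) := by
    simpa using hinv.mul hc1
  refine tendsto_of_tendsto_of_tendsto_of_le_of_le' hlow hup ?_ ?_
  · filter_upwards [eventually_ge_atTop (a 1)] with n hn
    obtain ⟨h1, h2⟩ := hk n hn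
    have hb1 : b (a (k n)) ≤ b n := hb.monotone h1
    have hb2 : b n ≤ b (a (k n + 1)) := hb.monotone h2
    have hfa : f (a (k n + 1)) ≤ f n := hf h2
    have hpos := hbpos (a (k n + 1))
    have heq : b (a (k n)) / b (a (k n + 1)) * (b (a (k n + 1)) * f (a (k n + 1)))
        = b (a (k n)) * f (a (k n + 1)) := by
      field_simp
    rw [heq]
    exact mul_le_mul hb1 hfa (hf0 _) (hbpos n).le
  · filter_upwards [eventually_ge_atTop (a 1)] with n hn
    obtain ⟨h1, h2⟩ := hk n hn
    have hb2 : b n ≤ b (a (k n + 1)) := hb.monotone h2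
    have hfle : f n ≤ f (a (k n)) := hf h1
    have hpos := hbpos (a (k n))
    have heq : b (a (k n + 1)) / b (a (k n)) * (b (a (k n)) * f (a (k n)))
        = b (a (k n + 1)) * f (a (k n)) := by
      field_simp
    rw [heq]
    exact mul_le_mul hb2 hfle (hf0 _) (hbpos _).le

end LERWCap
end
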